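/- arXiv:2410.20640 — 3 statements merged into one kernel-verified Lean document; each statement's English description precedes it below -/
import Mathlib

section
/- For the logistic function μ and any a, b ∈ ℝ, ∫₀¹ μ'(a + v(b−a)) dv ≥ μ'(a) / (1 + |b−a|), and also ≥ μ'(b) / (1 + |b−a|). -/
lemma hasDerivAt_logistic (z : ℝ) :
    HasDerivAt (fun z : ℝ => 1 / (1 + Real.exp (-z)))
      (Real.exp (-z) / (1 + Real.exp (-z)) ^ 2) z := by
  have h1 : HasDerivAt (fun z : ℝ => 1 + Real.exp (-z)) (-Real.exp (-z)) z := by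
    have h := (Real.hasDerivAt_exp (-z)).comp z (hasDerivAt_neg z)
    simpa using h.const_add 1
  have h2 : HasDerivAt (fun z : ℝ => (1 + Real.exp (-z))⁻¹) (- -Real.exp (-z) / (1 + Real.exp (-z)) ^ 2) z :=
    h1.inv (by positivity)
  have heq : (fun z : ℝ => 1 / (1 + Real.exp (-z))) = fun z : ℝ => (1 + Real.exp (-z))⁻¹ := by
    funext t; rw [one_div]
  rw [heq]
  convert h2 using 1
  ring

lemma deriv_logistic (z : ℝ) :
    deriv (fun z : ℝ => 1 / (1 + Real.exp (-z))) z
      = Real.exp (-z) / (1 + Real.exp (-z)) ^ 2 :=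
  (hasDerivAt_logistic z).deriv

lemma logistic_integral_eval (a b : ℝ) (hab : b - a ≠ 0) :
    (∫ v in (0:ℝ)..1, deriv (fun z : ℝ => 1 / (1 + Real.exp (-z))) (a + v * (b - a)))
      = (1 / (1 + Real.exp (-b)) - 1 / (1 + Real.exp (-a))) / (b - a) := by
  have hF : ∀ v : ℝ, HasDerivAt (fun v : ℝ => (1 / (1 + Real.exp (-(a + v * (b - a))))) / (b - a))
      (deriv (fun z : ℝ => 1 / (1 + Real.exp (-z))) (a + v * (b - a))) v := by
    intro v
    have hinner : HasDerivAt (fun v : ℝ => a + v * (b - a)) (b - a) v := by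
      simpa using ((hasDerivAt_id v).mul_const (b - a)).const_add a
    have h := ((hasDerivAt_logistic (a + v * (b - a))).comp v hinner).div_const (b - a)
    rw [mul_div_assoc, div_self hab, mul_one] at h
    rw [deriv_logistic]
    exact h
  have hInt : IntervalIntegrable
      (fun v => deriv (fun z : ℝ => 1 / (1 + Real.exp (-z))) (a + v * (b - a)))
      MeasureTheory.volume 0 1 := by
    have hc : Continuous fun v : ℝ =>
        Real.exp (-(a + v * (b - a))) / (1 + Real.exp (-(a + v * (b - a)))) ^ 2 := by
      apply Continuous.div (by continuity) (by continuity)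
      intro v; positivity
    have : (fun v : ℝ => deriv (fun z : ℝ => 1 / (1 + Real.exp (-z))) (a + v * (b - a)))
        = fun v => Real.exp (-(a + v * (b - a))) / (1 + Real.exp (-(a + v * (b - a)))) ^ 2 := by
      funext v; rw [deriv_logistic]
    rw [this]
    exact hc.intervalIntegrable 0 1
  rw [intervalIntegral.integral_eq_sub_of_hasDerivAt (fun v _ => hF v) hInt]
  rw [sub_div]; norm_num

lemma key_scalar (s x : ℝ) (hs : s ≠ 0) (hx : 0 < x) :
    (1 / (1 + x * Real.exp (-s)) - 1 / (1 + x)) / s ≥ x / ((1 + x) ^ 2 * (1 + |s|)) := by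
  have hE : 0 < Real.exp (-s) := Real.exp_pos _
  set E := Real.exp (-s) with hEdef
  have hd1 : (0:ℝ) < 1 + x * E := by positivity
  have hd2 : (0:ℝ) < 1 + x := by positivity
  rcases lt_or_gt_of_ne hs with hneg | hpos
  · -- s < 0
    rw [abs_of_neg hneg]
    have ht : 0 < -s := by linarith
    have hexp : -s + 1 ≤ E := Real.add_one_le_exp (-s)
    have hE1 : 1 ≤ E := by linarith
    have hnum : (1 / (1 + x * E) - 1 / (1 + x)) / s
        = x * (E - 1) / ((-s) * ((1 + x) * (1 + x * E))) := by
      field_simp; ring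
    rw [hnum, ge_iff_le, div_le_div_iff₀ (by positivity) (by positivity)]
    have key : (-s) * E ≤ (E - 1) * (1 + (-s)) := by nlinarith
    have h1 : (-s) * (1 + x * E) ≤ (-s) * E * (1 + x) := by nlinarith
    have h2 : (-s) * E * (1 + x) ≤ (E - 1) * (1 + (-s)) * (1 + x) :=
      mul_le_mul_of_nonneg_right key hd2.le
    calc x * ((-s) * ((1 + x) * (1 + x * E)))
        = x * (1 + x) * ((-s) * (1 + x * E)) := by ring
      _ ≤ x * (1 + x) * ((E - 1) * (1 + (-s)) * (1 + x)) := by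
          apply mul_le_mul_of_nonneg_left _ (by positivity)
          calc (-s) * (1 + x * E) ≤ (-s) * E * (1 + x) := h1
            _ ≤ (E - 1) * (1 + (-s)) * (1 + x) := h2
      _ = x * (E - 1) * ((1 + x) ^ 2 * (1 + -s)) := by ring
  · -- s > 0
    rw [abs_of_pos hpos]
    have hexp : s + 1 ≤ Real.exp s := Real.add_one_le_exp s
    have hEinv : E * Real.exp s = 1 := by rw [hEdef, ← Real.exp_add]; simp
    have hE1 : E ≤ 1 := by nlinarith [Real.exp_pos s]
    have key : s ≤ (1 - E) * (1 + s) := by nlinarith [Real.exp_pos s]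
    have hnum : (1 / (1 + x * E) - 1 / (1 + x)) / s
        = x * (1 - E) / (s * ((1 + x) * (1 + x * E))) := by
      field_simp; ring
    rw [hnum, ge_iff_le, div_le_div_iff₀ (by positivity) (by positivity)]
    have h1 : s * (1 + x * E) ≤ s * (1 + x) := by nlinarith [mul_nonneg (mul_nonneg hpos.le hx.le) (sub_nonneg.2 hE1)]
    have h2 : s * (1 + x) ≤ (1 - E) * (1 + s) * (1 + x) :=
      mul_le_mul_of_nonneg_right key hd2.le
    calc x * (s * ((1 + x) * (1 + x * E)))
        = x * (1 + x) * (s * (1 + x * E)) := by ring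
      _ ≤ x * (1 + x) * ((1 - E) * (1 + s) * (1 + x)) := by
          apply mul_le_mul_of_nonneg_left _ (by positivity)
          linarith
      _ = x * (1 - E) * ((1 + x) ^ 2 * (1 + s)) := by ring

/-- Local lower bound on the averaged derivative of the logistic function. -/
theorem logistic_integral_deriv_lower_bound (a b : ℝ) :
    ((∫ v in (0:ℝ)..1, deriv (fun z : ℝ => 1 / (1 + Real.exp (-z))) (a + v * (b - a)))
        ≥ deriv (fun z : ℝ => 1 / (1 + Real.exp (-z))) a / (1 + |b - a|)) ∧
    ((∫ v in (0:ℝ)..1, deriv (fun z : ℝ => 1 / (1 + Real.exp (-z))) (a + v * (b - a)))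
        ≥ deriv (fun z : ℝ => 1 / (1 + Real.exp (-z))) b / (1 + |b - a|)) := by
  by_cases hab : b - a = 0
  · have hba : b = a := by linarith
    subst hba
    simp only [hab, mul_zero, add_zero, abs_zero]
    rw [intervalIntegral.integral_const]
    norm_num
  · rw [logistic_integral_eval a b hab, deriv_logistic, deriv_logistic]
    constructor
    · -- use key_scalar with s = b - a, x = exp (-a)
      have h := key_scalar (b - a) (Real.exp (-a)) hab (Real.exp_pos _)
      have hxe : Real.exp (-a) * Real.exp (-(b - a)) = Real.exp (-b) := by
        rw [← Real.exp_add]; ring_nf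
      rw [hxe] at h
      simpa [div_div] using h
    · -- use key_scalar with s = a - b, x = exp (-b)
      have hba : a - b ≠ 0 := fun h => hab (by linarith)
      have h := key_scalar (a - b) (Real.exp (-b)) hba (Real.exp_pos _)
      have hxe : Real.exp (-b) * Real.exp (-(a - b)) = Real.exp (-a) := by
        rw [← Real.exp_add]; ring_nf
      rw [hxe] at h
      have habs : |a - b| = |b - a| := abs_sub_comm a b
      rw [habs] at h
      have heq : (1 / (1 + Real.exp (-a)) - 1 / (1 + Real.exp (-b))) / (a - b)
          = (1 / (1 + Real.exp (-b)) - 1 / (1 + Real.exp (-a))) / (b - a) := by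
        rw [div_eq_div_iff (by exact hba) (by exact hab)] <;> ring
      rw [heq] at h
      simpa [div_div] using h
end

section
/- (BAI characteristic time) Let 𝒳 ⊂ ℝ^d be finite, θ ∈ ℝ^d with unique best arm x* = argmax_{x∈𝒳} xᵀθ, and let H_w(θ) be positive definite for a fixed w in the interior of the simplex. Then inf over λ ∈ Alt(θ) of (1/2)‖θ−λ‖²_{H_w(θ)} equals min_{x ≠ x*} (θᵀx* − θᵀx)² / (2‖x* − x‖²_{H_w(θ)⁻¹}), where Alt(θ) = {λ : argmax_{x∈𝒳} xᵀλ ≠ x*}. -/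
open Matrix Finset

lemma bai_symm {d : ℕ} {H : Matrix (Fin d) (Fin d) ℝ} (hH : H.PosDef)
    (u v : Fin d → ℝ) : u ⬝ᵥ H *ᵥ v = v ⬝ᵥ H *ᵥ u := by
  have hs : Hᵀ = H := by simpa using hH.isHermitian.eq
  rw [dotProduct_mulVec, ← mulVec_transpose, hs, dotProduct_comm]

lemma bai_pos {d : ℕ} {H : Matrix (Fin d) (Fin d) ℝ} (hH : H.PosDef)
    {v : Fin d → ℝ} (hv : v ≠ 0) : 0 < v ⬝ᵥ H *ᵥ v := by
  simpa using hH.dotProduct_mulVec_pos hv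

lemma bai_nonneg {d : ℕ} {H : Matrix (Fin d) (Fin d) ℝ} (hH : H.PosDef)
    (v : Fin d → ℝ) : 0 ≤ v ⬝ᵥ H *ᵥ v := by
  rcases eq_or_ne v 0 with rfl | hv
  · simp
  · exact (bai_pos hH hv).le

lemma bai_cs {d : ℕ} {H : Matrix (Fin d) (Fin d) ℝ} (hH : H.PosDef)
    (u v : Fin d → ℝ) :
    (u ⬝ᵥ H *ᵥ v) ^ 2 ≤ (u ⬝ᵥ H *ᵥ u) * (v ⬝ᵥ H *ᵥ v) := by
  rcases eq_or_ne u 0 with rfl | hu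
  · simp
  have hαpos : 0 < u ⬝ᵥ H *ᵥ u := bai_pos hH hu
  have hq : 0 ≤ ((u ⬝ᵥ H *ᵥ u) • v - (u ⬝ᵥ H *ᵥ v) • u) ⬝ᵥ
      H *ᵥ ((u ⬝ᵥ H *ᵥ u) • v - (u ⬝ᵥ H *ᵥ v) • u) := bai_nonneg hH _
  have hexp : ((u ⬝ᵥ H *ᵥ u) • v - (u ⬝ᵥ H *ᵥ v) • u) ⬝ᵥ
      H *ᵥ ((u ⬝ᵥ H *ᵥ u) • v - (u ⬝ᵥ H *ᵥ v) • u)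
      = (u ⬝ᵥ H *ᵥ u) * ((u ⬝ᵥ H *ᵥ u) * (v ⬝ᵥ H *ᵥ v) - (u ⬝ᵥ H *ᵥ v) ^ 2) := by
    simp only [mulVec_sub, mulVec_smul, sub_dotProduct, dotProduct_sub,
      smul_dotProduct, dotProduct_smul, smul_eq_mul]
    rw [bai_symm hH v u]
    ring
  rw [hexp] at hq
  nlinarith [hq, hαpos]

lemma bai_arith (T A ε : ℝ) (hT : 0 < T) (hA : 0 < A) (hε : 0 < ε) :
    ∃ s : ℝ, T / A < s ∧ (1 / 2) * (s ^ 2 * A) ≤ T ^ 2 / (2 * A) + ε := by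
  set s₀ := T / A with hs₀
  have hs₀pos : 0 < s₀ := div_pos hT hA
  set K := (2 * s₀ + 1) * A / 2 with hK
  have hKpos : 0 < K := by rw [hK]; positivity
  set δ := min 1 (ε / K) with hδ
  have hδpos : 0 < δ := lt_min one_pos (div_pos hε hKpos)
  have hδ1 : δ ≤ 1 := min_le_left _ _
  have hδK : δ * K ≤ ε := by
    have h2 : δ ≤ ε / K := min_le_right _ _
    calc δ * K ≤ (ε / K) * K := by nlinarith
    _ = ε := by field_simp
  refine ⟨s₀ + δ, by linarith, ?_⟩
  have hbase : (1 / 2) * (s₀ ^ 2 * A) = T ^ 2 / (2 * A) := by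
    rw [hs₀]; field_simp
  have hδsq : δ ^ 2 ≤ δ := by nlinarith
  have hid : (1 / 2) * ((s₀ + δ) ^ 2 * A)
      = (1 / 2) * (s₀ ^ 2 * A) + (2 * s₀ * δ + δ ^ 2) * A / 2 := by ring
  have h3 : (2 * s₀ * δ + δ ^ 2) * A / 2 ≤ δ * K := by rw [hK]; nlinarith
  linarith

/-- BAI characteristic time: the infimum of `(1/2)‖θ−λ‖²_{H_w(θ)}` over the
alternative set equals the minimum over suboptimal arms of
`(θᵀx* − θᵀx)² / (2‖x* − x‖²_{H_w(θ)⁻¹})`. -/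
theorem bai_characteristic_time
    (d : ℕ) (X : Finset (Fin d → ℝ)) (θ : Fin d → ℝ)
    (xstar : Fin d → ℝ) (hxstar : xstar ∈ X)
    (hbest : ∀ x ∈ X, x ≠ xstar → x ⬝ᵥ θ < xstar ⬝ᵥ θ)
    (hne : (X.erase xstar).Nonempty)
    (w : (Fin d → ℝ) → ℝ) (hw : ∀ x ∈ X, 0 < w x) (hw1 : ∑ x ∈ X, w x = 1)
    (H : Matrix (Fin d) (Fin d) ℝ)
    (hHdef : H = ∑ x ∈ X,
      (w x * deriv (fun z : ℝ => 1 / (1 + Real.exp (-z))) (x ⬝ᵥ θ))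
        • vecMulVec x x)
    (hH : H.PosDef) :
    sInf {r : ℝ | ∃ l : Fin d → ℝ,
        (∃ x ∈ X, x ≠ xstar ∧ x ⬝ᵥ l > xstar ⬝ᵥ l) ∧
        r = (1 / 2) * ((θ - l) ⬝ᵥ H.mulVec (θ - l))}
      = (X.erase xstar).inf' hne (fun x =>
          (θ ⬝ᵥ xstar - θ ⬝ᵥ x) ^ 2
            / (2 * ((xstar - x) ⬝ᵥ H⁻¹.mulVec (xstar - x)))) := by
  classical
  have hHinv : H⁻¹.PosDef := hH.inv
  have hHHinv : ∀ a : Fin d → ℝ, H *ᵥ (H⁻¹ *ᵥ a) = a := by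
    intro a
    rw [mulVec_mulVec, Matrix.mul_nonsing_inv _ hH.det_pos.ne'.isUnit, one_mulVec]
  set S : Set ℝ := {r : ℝ | ∃ l : Fin d → ℝ,
        (∃ x ∈ X, x ≠ xstar ∧ x ⬝ᵥ l > xstar ⬝ᵥ l) ∧
        r = (1 / 2) * ((θ - l) ⬝ᵥ H.mulVec (θ - l))} with hSdef
  -- basic facts for each suboptimal arm
  have key : ∀ x ∈ X.erase xstar,
      0 < θ ⬝ᵥ xstar - θ ⬝ᵥ x ∧ 0 < (xstar - x) ⬝ᵥ H⁻¹ *ᵥ (xstar - x) := by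
    intro x hx
    obtain ⟨hxne, hxX⟩ := Finset.mem_erase.mp hx
    have h1 : x ⬝ᵥ θ < xstar ⬝ᵥ θ := hbest x hxX hxne
    have ha : xstar - x ≠ 0 := sub_ne_zero.mpr (Ne.symm hxne)
    refine ⟨?_, bai_pos hHinv ha⟩
    rw [dotProduct_comm θ xstar, dotProduct_comm θ x]
    linarith
  -- membership of approximants
  have hmem : ∀ x ∈ X.erase xstar, ∀ s : ℝ,
      (θ ⬝ᵥ xstar - θ ⬝ᵥ x) / ((xstar - x) ⬝ᵥ H⁻¹ *ᵥ (xstar - x)) < s →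
      (1 / 2) * (s ^ 2 * ((xstar - x) ⬝ᵥ H⁻¹ *ᵥ (xstar - x))) ∈ S := by
    intro x hx s hs
    obtain ⟨hxne, hxX⟩ := Finset.mem_erase.mp hx
    obtain ⟨hθa, hα⟩ := key x hx
    have hTa : θ ⬝ᵥ (xstar - x) = θ ⬝ᵥ xstar - θ ⬝ᵥ x := dotProduct_sub θ _ _
    refine ⟨θ - s • (H⁻¹ *ᵥ (xstar - x)), ⟨x, hxX, hxne, ?_⟩, ?_⟩
    · have hal : (xstar - x) ⬝ᵥ (θ - s • (H⁻¹ *ᵥ (xstar - x)))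
          = (θ ⬝ᵥ xstar - θ ⬝ᵥ x) - s * ((xstar - x) ⬝ᵥ H⁻¹ *ᵥ (xstar - x)) := by
        rw [dotProduct_sub, dotProduct_smul, smul_eq_mul,
          dotProduct_comm (xstar - x) θ, hTa]
      have hneg : (xstar - x) ⬝ᵥ (θ - s • (H⁻¹ *ᵥ (xstar - x))) < 0 := by
        rw [hal]
        have : θ ⬝ᵥ xstar - θ ⬝ᵥ x < s * ((xstar - x) ⬝ᵥ H⁻¹ *ᵥ (xstar - x)) := by
          rw [div_lt_iff₀ hα] at hs
          linarith
        linarith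
      have hsplit : (xstar - x) ⬝ᵥ (θ - s • (H⁻¹ *ᵥ (xstar - x)))
          = xstar ⬝ᵥ (θ - s • (H⁻¹ *ᵥ (xstar - x)))
            - x ⬝ᵥ (θ - s • (H⁻¹ *ᵥ (xstar - x))) := sub_dotProduct _ _ _
      rw [hsplit] at hneg
      linarith
    · have hv : θ - (θ - s • (H⁻¹ *ᵥ (xstar - x))) = s • (H⁻¹ *ᵥ (xstar - x)) := by
        abel
      rw [hv]
      have huHu : (H⁻¹ *ᵥ (xstar - x)) ⬝ᵥ H *ᵥ (H⁻¹ *ᵥ (xstar - x))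
          = (xstar - x) ⬝ᵥ H⁻¹ *ᵥ (xstar - x) := by
        rw [hHHinv (xstar - x), dotProduct_comm]
      show _ = (1 / 2) * ((s • (H⁻¹ *ᵥ (xstar - x))) ⬝ᵥ H *ᵥ (s • (H⁻¹ *ᵥ (xstar - x))))
      rw [mulVec_smul, smul_dotProduct, dotProduct_smul, smul_eq_mul, smul_eq_mul, huHu]
      ring
  -- lower bound: every element of S is at least the min
  have hlb : ∀ r ∈ S, (X.erase xstar).inf' hne (fun x =>
          (θ ⬝ᵥ xstar - θ ⬝ᵥ x) ^ 2
            / (2 * ((xstar - x) ⬝ᵥ H⁻¹.mulVec (xstar - x)))) ≤ r := by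
    rintro r ⟨l, ⟨x, hxX, hxne, hxl⟩, rfl⟩
    have hx : x ∈ X.erase xstar := Finset.mem_erase.mpr ⟨hxne, hxX⟩
    obtain ⟨hθa, hα⟩ := key x hx
    refine le_trans (Finset.inf'_le _ hx) ?_
    show (θ ⬝ᵥ xstar - θ ⬝ᵥ x) ^ 2 / (2 * ((xstar - x) ⬝ᵥ H⁻¹ *ᵥ (xstar - x)))
        ≤ (1 / 2) * ((θ - l) ⬝ᵥ H *ᵥ (θ - l))
    have huHu : (H⁻¹ *ᵥ (xstar - x)) ⬝ᵥ H *ᵥ (H⁻¹ *ᵥ (xstar - x))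
        = (xstar - x) ⬝ᵥ H⁻¹ *ᵥ (xstar - x) := by
      rw [hHHinv (xstar - x), dotProduct_comm]
    have huHv : (H⁻¹ *ᵥ (xstar - x)) ⬝ᵥ H *ᵥ (θ - l) = (xstar - x) ⬝ᵥ (θ - l) := by
      rw [bai_symm hH, hHHinv (xstar - x), dotProduct_comm]
    have hcs := bai_cs hH (H⁻¹ *ᵥ (xstar - x)) (θ - l)
    rw [huHu, huHv] at hcs
    have hav : θ ⬝ᵥ xstar - θ ⬝ᵥ x ≤ (xstar - x) ⬝ᵥ (θ - l) := by
      have h1 : (xstar - x) ⬝ᵥ (θ - l)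
          = (θ ⬝ᵥ xstar - θ ⬝ᵥ x) - (xstar ⬝ᵥ l - x ⬝ᵥ l) := by
        rw [dotProduct_sub, dotProduct_comm (xstar - x) θ, dotProduct_sub θ,
          sub_dotProduct]
      linarith [h1, hxl]
    have hsq : (θ ⬝ᵥ xstar - θ ⬝ᵥ x) ^ 2 ≤ ((xstar - x) ⬝ᵥ (θ - l)) ^ 2 := by
      nlinarith
    rw [div_le_iff₀ (by linarith)]
    nlinarith [bai_nonneg hH (θ - l), hα, hcs, hsq]
  have hSne : S.Nonempty := by
    obtain ⟨x₀, hx₀⟩ := hne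
    obtain ⟨hθa, hα⟩ := key x₀ hx₀
    exact ⟨_, hmem x₀ hx₀
      ((θ ⬝ᵥ xstar - θ ⬝ᵥ x₀) / ((xstar - x₀) ⬝ᵥ H⁻¹ *ᵥ (xstar - x₀)) + 1)
      (by linarith)⟩
  have hbdd : BddBelow S := ⟨_, hlb⟩
  refine le_antisymm ?_ (le_csInf hSne hlb)
  obtain ⟨x₀, hx₀, hfx₀⟩ := Finset.exists_mem_eq_inf' hne (fun x =>
          (θ ⬝ᵥ xstar - θ ⬝ᵥ x) ^ 2
            / (2 * ((xstar - x) ⬝ᵥ H⁻¹.mulVec (xstar - x))))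
  rw [hfx₀]
  obtain ⟨hθa, hα⟩ := key x₀ hx₀
  refine le_of_forall_pos_le_add ?_
  intro ε hε
  obtain ⟨s, hs1, hs2⟩ := bai_arith (θ ⬝ᵥ xstar - θ ⬝ᵥ x₀)
    ((xstar - x₀) ⬝ᵥ H⁻¹ *ᵥ (xstar - x₀)) ε hθa hα hε
  exact le_trans (csInf_le hbdd (hmem x₀ hx₀ s hs1)) hs2
end

section
/- (Thresholding bandit characteristic time) Let 𝒳 ⊂ ℝ^d be finite, ρ ∈ (0,1), θ ∈ ℝ^d with μ(xᵀθ) ≠ ρ for all x ∈ 𝒳, and H a fixed positive definite matrix. Define Alt(θ) := {λ : ∃ x ∈ 𝒳 with sign(xᵀλ − μ⁻¹(ρ)) ≠ sign(xᵀθ − μ⁻¹(ρ))}. Then inf_{λ∈Alt(θ)} (1/2)‖θ−λ‖²_H = min_{x∈𝒳} (θᵀx − μ⁻¹(ρ))² / (2‖x‖²_{H⁻¹}). -/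
open Matrix Finset

/-- Thresholding bandit characteristic time. -/
theorem tbp_characteristic_time
    (d : ℕ) (X : Finset (Fin d → ℝ)) (hX : X.Nonempty)
    (hx0 : ∀ x ∈ X, x ≠ 0)
    (ρ : ℝ) (hρ : ρ ∈ Set.Ioo (0:ℝ) 1) (θ : Fin d → ℝ)
    (hθ : ∀ x ∈ X, 1 / (1 + Real.exp (-(x ⬝ᵥ θ))) ≠ ρ)
    (H : Matrix (Fin d) (Fin d) ℝ) (hH : H.PosDef) :
    sInf {r : ℝ | ∃ l : Fin d → ℝ,
        (∃ x ∈ X, Real.sign (x ⬝ᵥ l - Real.log (ρ / (1 - ρ)))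
            ≠ Real.sign (x ⬝ᵥ θ - Real.log (ρ / (1 - ρ)))) ∧
        r = (1 / 2) * ((θ - l) ⬝ᵥ H.mulVec (θ - l))}
      = X.inf' hX (fun x =>
          (θ ⬝ᵥ x - Real.log (ρ / (1 - ρ))) ^ 2
            / (2 * (x ⬝ᵥ H⁻¹.mulVec x))) := by
  obtain ⟨hρ0, hρ1⟩ := hρ
  set c := Real.log (ρ / (1 - ρ)) with hc
  set f : (Fin d → ℝ) → ℝ := fun x =>
      (θ ⬝ᵥ x - c) ^ 2 / (2 * (x ⬝ᵥ H⁻¹.mulVec x)) with hf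
  set S : Set ℝ := {r : ℝ | ∃ l : Fin d → ℝ,
      (∃ x ∈ X, Real.sign (x ⬝ᵥ l - c) ≠ Real.sign (x ⬝ᵥ θ - c)) ∧
      r = (1 / 2) * ((θ - l) ⬝ᵥ H.mulVec (θ - l))} with hS
  set m : ℝ := X.inf' hX f with hm
  -- basic matrix facts
  have hsymm : ∀ u v : Fin d → ℝ, u ⬝ᵥ H.mulVec v = v ⬝ᵥ H.mulVec u := by
    intro u v
    have hs : Hᵀ = H := hH.1
    rw [Matrix.dotProduct_mulVec, ← Matrix.mulVec_transpose, hs, dotProduct_comm]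
  have hHinv : ∀ x : Fin d → ℝ, H.mulVec (H⁻¹.mulVec x) = x := by
    intro x
    rw [Matrix.mulVec_mulVec, Matrix.mul_nonsing_inv _ hH.det_pos.ne'.isUnit, Matrix.one_mulVec]
  have hq : ∀ x ∈ X, 0 < x ⬝ᵥ H⁻¹.mulVec x := by
    intro x hx
    have := hH.inv.dotProduct_mulVec_pos (hx0 x hx)
    simpa using this
  -- the threshold is not hit
  have hne : ∀ x ∈ X, x ⬝ᵥ θ - c ≠ 0 := by
    intro x hx h
    apply hθ x hx
    have hxθ : x ⬝ᵥ θ = c := by linarith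
    have h1ρ : 0 < 1 - ρ := by linarith
    rw [hxθ, hc, ← Real.log_inv, Real.exp_log (by positivity)]
    rw [inv_div]
    field_simp
    ring
  -- Cauchy-Schwarz: (x ⬝ᵥ u)^2 ≤ (u ⬝ᵥ H u) * (x ⬝ᵥ H⁻¹ x)
  have hCS : ∀ (u : Fin d → ℝ), ∀ x ∈ X,
      (x ⬝ᵥ u) ^ 2 ≤ (u ⬝ᵥ H.mulVec u) * (x ⬝ᵥ H⁻¹.mulVec x) := by
    intro u x hx
    set q := x ⬝ᵥ H⁻¹.mulVec x with hqdef
    have hq0 : 0 < q := hq x hx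
    set b := x ⬝ᵥ u with hbdef
    set s := b / q with hsdef
    set w := u - s • (H⁻¹.mulVec x) with hwdef
    have h1 : u ⬝ᵥ H.mulVec (H⁻¹.mulVec x) = b := by
      rw [hHinv, dotProduct_comm]
    have h2 : (H⁻¹.mulVec x) ⬝ᵥ H.mulVec u = b := by rw [hsymm, h1]
    have h3 : (H⁻¹.mulVec x) ⬝ᵥ H.mulVec (H⁻¹.mulVec x) = q := by
      rw [hHinv, dotProduct_comm]
    have hexp : w ⬝ᵥ H.mulVec w
        = u ⬝ᵥ H.mulVec u - 2 * s * b + s ^ 2 * q := by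
      simp only [hwdef, Matrix.mulVec_sub, Matrix.mulVec_smul, sub_dotProduct,
        dotProduct_sub, smul_dotProduct, dotProduct_smul,
        smul_eq_mul, h1, h2, h3]
      ring
    have hw0 : 0 ≤ w ⬝ᵥ H.mulVec w := by
      have := hH.posSemidef.dotProduct_mulVec_nonneg w
      simpa using this
    have hsq : s * q = b := div_mul_cancel₀ b hq0.ne'
    nlinarith [mul_nonneg hq0.le (hexp ▸ hw0)]
  -- lower bound : every element of S is ≥ m
  have hlb : ∀ r ∈ S, m ≤ r := by
    rintro r ⟨l, ⟨x, hx, hsign⟩, rfl⟩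
    set u := θ - l with hu
    set b := x ⬝ᵥ θ - c with hb
    set a := x ⬝ᵥ l - c with ha
    have hbne : b ≠ 0 := hne x hx
    have hab : a * b ≤ 0 := by
      by_contra h
      push_neg at h
      apply hsign
      rcases lt_trichotomy a 0 with h1 | h1 | h1
      · have hb1 : b < 0 := by nlinarith
        rw [Real.sign_of_neg h1, Real.sign_of_neg hb1]
      · simp [h1] at h
      · have hb1 : 0 < b := by nlinarith
        rw [Real.sign_of_pos h1, Real.sign_of_pos hb1]
    have hxu : x ⬝ᵥ u = b - a := by
      simp only [hu, dotProduct_sub, hb, ha]; ring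
    have hb2 : b ^ 2 ≤ (x ⬝ᵥ u) ^ 2 := by rw [hxu]; nlinarith
    have hcs := hCS u x hx
    have hq0 := hq x hx
    have hfx : f x ≤ (1 / 2) * (u ⬝ᵥ H.mulVec u) := by
      rw [hf]
      simp only
      rw [div_le_iff₀ (by positivity)]
      have hbb : θ ⬝ᵥ x - c = b := by rw [dotProduct_comm]
      rw [hbb]
      calc b ^ 2 ≤ (x ⬝ᵥ u) ^ 2 := hb2
        _ ≤ (u ⬝ᵥ H.mulVec u) * (x ⬝ᵥ H⁻¹.mulVec x) := hcs
        _ = 1 / 2 * (u ⬝ᵥ H.mulVec u) * (2 * (x ⬝ᵥ H⁻¹.mulVec x)) := by ring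
    exact le_trans (Finset.inf'_le f hx) hfx
  -- attainment
  obtain ⟨x₀, hx₀, hmx₀⟩ := Finset.exists_mem_eq_inf' hX f
  have hq0 : 0 < x₀ ⬝ᵥ H⁻¹.mulVec x₀ := hq x₀ hx₀
  set q₀ := x₀ ⬝ᵥ H⁻¹.mulVec x₀ with hq₀def
  set b₀ := x₀ ⬝ᵥ θ - c with hb₀def
  have hb₀ : b₀ ≠ 0 := hne x₀ hx₀
  set t := b₀ / q₀ with ht
  set l₀ := θ - t • (H⁻¹.mulVec x₀) with hl₀
  have hq0' : q₀ ≠ 0 := hq0.ne'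
  have h' : t * q₀ = b₀ := by
    rw [ht, div_mul_cancel₀ _ hq0.ne']
  have hmem : m ∈ S := by
    refine ⟨l₀, ⟨x₀, hx₀, ?_⟩, ?_⟩
    · have hx₀l : x₀ ⬝ᵥ l₀ - c = 0 := by
        simp only [hl₀, dotProduct_sub, dotProduct_smul, smul_eq_mul,
          ← hq₀def]
        linarith [h', hb₀def]
      rw [hx₀l, Real.sign_zero]
      intro h
      exact hb₀ (Real.sign_eq_zero_iff.mp h.symm)
    · have hdiff : θ - l₀ = t • (H⁻¹.mulVec x₀) := by
        rw [hl₀]; abel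
      rw [hdiff]
      have h3 : (H⁻¹.mulVec x₀) ⬝ᵥ H.mulVec (H⁻¹.mulVec x₀) = q₀ := by
        rw [hHinv, dotProduct_comm]
      simp only [Matrix.mulVec_smul, smul_dotProduct, dotProduct_smul,
        smul_eq_mul, h3]
      rw [hm, hmx₀, hf]
      simp only [← hq₀def]
      have hbb : θ ⬝ᵥ x₀ - c = b₀ := by rw [dotProduct_comm]
      rw [hbb, h', ht]
      field_simp
  refine le_antisymm (csInf_le ⟨m, hlb⟩ hmem) (le_csInf ⟨m, hmem⟩ hlb)
end
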